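/- A single-source external flow (x_1, …, x_k), where x_i ≤ 0 for all i ≥ 2, is realizable in a finite directed flow network G with terminals q_1, …, q_k if and only if (1) the sum of all x_i is 0, and (2) for every nonempty subset S of {q_2, …, q_k}, the sum of −x_i over q_i ∈ S is at most (q_1 ↛ S), the minimum capacity of a cut separating q_1 from S. -/

import Mathlib

open Finset

/-- Capacity of the cut determined by vertex set `A`: total capacity of edges leaving `A`. -/
def cutCap {V : Type} [Fintype V] [DecidableEq V] (c : V → V → ℝ) (A : Finset V) : ℝ :=
  ∑ u ∈ A, ∑ v ∈ Aᶜ, c u v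

/-- Minimum capacity of a cut with all of `S` on the source side and all of `T` on the sink side. -/
noncomputable def minCut {V : Type} [Fintype V] [DecidableEq V] (c : V → V → ℝ) (S T : Finset V) : ℝ :=
  sInf {x : ℝ | ∃ A : Finset V, S ⊆ A ∧ Disjoint T A ∧ x = cutCap c A}

/-- Net outflow of `f` at vertex `v`. -/
def netOut {V : Type} [Fintype V] (f : V → V → ℝ) (v : V) : ℝ :=
  (∑ w, f v w) - ∑ w, f w v

/-- `f` is an external flow in the network with capacities `c`, terminals `q` and
terminal net-outflow values `x`. -/
def IsExtFlow {V : Type} [Fintype V] {k : ℕ} (c f : V → V → ℝ) (q : Fin k → V)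
    (x : Fin k → ℝ) : Prop :=
  (∀ u v, 0 ≤ f u v ∧ f u v ≤ c u v) ∧
  (∀ v, (∀ i, q i ≠ v) → netOut f v = 0) ∧
  (∀ i, netOut f (q i) = x i)

section Aux

variable {V : Type} [Fintype V] [DecidableEq V]

lemma sum_netOut_cut (f : V → V → ℝ) (A : Finset V) :
    ∑ v ∈ A, netOut f v = ∑ u ∈ A, ∑ v ∈ Aᶜ, (f u v - f v u) := by
  simp only [netOut, Finset.sum_sub_distrib]
  have h1 : ∀ v ∈ A, ∑ w, f v w = ∑ w ∈ A, f v w + ∑ w ∈ Aᶜ, f v w := by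
    intro v _; rw [Finset.sum_add_sum_compl]
  have h2 : ∀ v ∈ A, ∑ w, f w v = ∑ w ∈ A, f w v + ∑ w ∈ Aᶜ, f w v := by
    intro v _; rw [Finset.sum_add_sum_compl]
  rw [Finset.sum_congr rfl h1, Finset.sum_congr rfl h2, Finset.sum_add_distrib,
    Finset.sum_add_distrib]
  rw [Finset.sum_comm (s := A) (t := A) (f := fun v w => f w v)]
  ring

lemma sum_netOut_univ (f : V → V → ℝ) : ∑ v, netOut f v = 0 := by
  simp only [netOut, Finset.sum_sub_distrib]
  rw [Finset.sum_comm]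
  ring

lemma cutCap_eq (c : V → V → ℝ) (A : Finset V) :
    cutCap c A = ∑ u, ∑ v, if u ∈ A ∧ v ∉ A then c u v else 0 := by
  symm
  calc ∑ u, ∑ v, (if u ∈ A ∧ v ∉ A then c u v else 0)
      = ∑ u, if u ∈ A then ∑ v ∈ Aᶜ, c u v else 0 := by
        apply Finset.sum_congr rfl; intro u _
        by_cases h : u ∈ A
        · simp only [h, true_and, if_true, ← Finset.mem_compl]
          rw [Finset.sum_ite_mem, Finset.univ_inter]
        · simp [h]
    _ = cutCap c A := by
        rw [Finset.sum_ite_mem]; simp [cutCap]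

def Feasible (c f : V → V → ℝ) : Prop := ∀ u v, 0 ≤ f u v ∧ f u v ≤ c u v

def addEdge (f : V → V → ℝ) (a b : V) (ε : ℝ) : V → V → ℝ :=
  fun p q => if p = a ∧ q = b then f p q + ε else f p q

lemma netOut_addEdge (f : V → V → ℝ) (a b : V) (ε : ℝ) (w : V) :
    netOut (addEdge f a b ε) w
      = netOut f w + ε * ((if w = a then 1 else 0) - (if w = b then 1 else 0)) := by
  unfold netOut addEdge
  have h1 : ∑ v, (if w = a ∧ v = b then f w v + ε else f w v)
      = (∑ v, f w v) + (if w = a then ε else 0) := by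
    have : ∀ v, (if w = a ∧ v = b then f w v + ε else f w v)
        = f w v + (if w = a ∧ v = b then ε else 0) := by
      intro v; split <;> simp
    rw [Finset.sum_congr rfl fun v _ => this v, Finset.sum_add_distrib]
    congr 1
    by_cases h : w = a <;> simp [h, Finset.sum_ite_eq']
  have h2 : ∑ v, (if v = a ∧ w = b then f v w + ε else f v w)
      = (∑ v, f v w) + (if w = b then ε else 0) := by
    have : ∀ v, (if v = a ∧ w = b then f v w + ε else f v w)
        = f v w + (if v = a ∧ w = b then ε else 0) := by
      intro v; split <;> simp
    rw [Finset.sum_congr rfl fun v _ => this v, Finset.sum_add_distrib]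
    congr 1
    by_cases h : w = b <;> simp [h, Finset.sum_ite_eq']
  rw [h1, h2]
  split_ifs <;> ring

lemma exists_augment (c f : V → V → ℝ) (hf : Feasible c f) (s : V) :
    ∀ v, Relation.ReflTransGen (fun a b => f a b < c a b ∨ 0 < f b a) s v →
    ∀ ε0 > 0, ∃ ε, 0 < ε ∧ ε ≤ ε0 ∧ ∃ g, Feasible c g ∧ (∀ a b, |g a b - f a b| ≤ ε0) ∧
      ∀ w, netOut g w = netOut f w
        + ε * ((if w = s then 1 else 0) - (if w = v then 1 else 0)) := by
  intro v h
  induction h with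
  | refl =>
    intro ε0 hε0
    exact ⟨ε0, hε0, le_refl _, f, hf, fun a b => by simp [abs_of_nonneg, le_of_lt hε0],
      fun w => by ring⟩
  | @tail u v hpath hrel ih =>
    intro ε0 hε0
    by_cases huv : u = v
    · subst huv; exact ih ε0 hε0
    rcases hrel with hlt | hgt
    · -- push forward on edge (u, v)
      set s0 := c u v - f u v with hs0
      have hs0pos : 0 < s0 := by simp [hs0]; linarith
      obtain ⟨ε, hεpos, hεle, g, hgfeas, hgclose, hgnet⟩ :=
        ih (min (ε0 / 2) (s0 / 2)) (by positivity)
      refine ⟨ε, hεpos, le_trans hεle (le_trans (min_le_left _ _) (by linarith)),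
        addEdge g u v ε, ?_, ?_, ?_⟩
      · intro a b
        obtain ⟨h01, h02⟩ := hgfeas a b
        unfold addEdge
        split
        · rename_i hab
          obtain ⟨ha, hb⟩ := hab; subst ha; subst hb
          constructor
          · linarith
          · have := hgclose a b
            have h1 : ε ≤ s0 / 2 := le_trans hεle (min_le_right _ _)
            have h2 : |g a b - f a b| ≤ s0 / 2 := le_trans this (min_le_right _ _)
            rw [abs_le] at h2
            simp only [hs0] at *
            linarith
        · exact ⟨h01, h02⟩
      · intro a b
        unfold addEdge
        split
        · have h1 := hgclose a b
          have h2 : ε ≤ ε0 / 2 := le_trans hεle (min_le_left _ _)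
          have h3 : |g a b - f a b| ≤ ε0 / 2 := le_trans h1 (min_le_left _ _)
          rw [abs_le] at *
          constructor <;> linarith
        · exact le_trans (hgclose a b) (le_trans (min_le_left _ _) (by linarith))
      · intro w
        rw [netOut_addEdge, hgnet w]
        split_ifs <;> simp_all <;> ring
    · -- pull back on edge (v, u)
      set s0 := f v u with hs0
      obtain ⟨ε, hεpos, hεle, g, hgfeas, hgclose, hgnet⟩ :=
        ih (min (ε0 / 2) (s0 / 2)) (by positivity)
      refine ⟨ε, hεpos, le_trans hεle (le_trans (min_le_left _ _) (by linarith)),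
        addEdge g v u (-ε), ?_, ?_, ?_⟩
      · intro a b
        obtain ⟨h01, h02⟩ := hgfeas a b
        unfold addEdge
        split
        · rename_i hab
          obtain ⟨ha, hb⟩ := hab; subst ha; subst hb
          have h1 : ε ≤ s0 / 2 := le_trans hεle (min_le_right _ _)
          have h2 : |g a b - f a b| ≤ s0 / 2 := le_trans (hgclose a b) (min_le_right _ _)
          rw [abs_le] at h2
          constructor <;> [skip; linarith]
          simp only [hs0] at *
          linarith
        · exact ⟨h01, h02⟩
      · intro a b
        unfold addEdge
        split
        · have h3 : |g a b - f a b| ≤ ε0 / 2 := le_trans (hgclose a b) (min_le_left _ _)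
          have h2 : ε ≤ ε0 / 2 := le_trans hεle (min_le_left _ _)
          rw [abs_le] at *
          constructor <;> linarith
        · exact le_trans (hgclose a b) (le_trans (min_le_left _ _) (by linarith))
      · intro w
        rw [netOut_addEdge, hgnet w]
        split_ifs <;> simp_all <;> ring

def FlowSet (c : V → V → ℝ) (s t : V) : Set (V → V → ℝ) :=
  {f | Feasible c f ∧ ∀ w, w ≠ s → w ≠ t → netOut f w = 0}

lemma exists_maxflow (c : V → V → ℝ) (hc : ∀ u v, 0 ≤ c u v) (s t : V) :
    ∃ f ∈ FlowSet c s t, IsMaxOn (fun g => netOut g s) (FlowSet c s t) f := by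
  have hcont : Continuous fun (g : V → V → ℝ) (p : V × V) => g p.1 p.2 := by fun_prop
  have hconts : ∀ w, Continuous fun g : V → V → ℝ => netOut g w := by
    intro w
    unfold netOut
    fun_prop
  have hclosed : IsClosed (FlowSet c s t) := by
    have h1 : FlowSet c s t =
        (⋂ u, ⋂ v, {g : V → V → ℝ | 0 ≤ g u v ∧ g u v ≤ c u v}) ∩
        (⋂ w ∈ {w : V | w ≠ s ∧ w ≠ t}, {g | netOut g w = 0}) := by
      ext g
      simp [FlowSet, Feasible, forall_and]
    rw [h1]
    apply IsClosed.inter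
    · apply isClosed_iInter; intro u; apply isClosed_iInter; intro v
      have : Continuous fun g : V → V → ℝ => g u v := by fun_prop
      exact (isClosed_le continuous_const this).inter (isClosed_le this continuous_const)
    · apply isClosed_biInter; intro w _
      exact isClosed_eq (hconts w) continuous_const
  have hsub : FlowSet c s t ⊆ Set.pi Set.univ (fun u => Set.pi Set.univ fun v => Set.Icc 0 (c u v)) := by
    intro g hg u _ v _
    exact ⟨(hg.1 u v).1, (hg.1 u v).2⟩
  have hcompact : IsCompact (FlowSet c s t) := by
    refine IsCompact.of_isClosed_subset ?_ hclosed hsub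
    exact isCompact_univ_pi fun u => isCompact_univ_pi fun v => isCompact_Icc
  have hne : (FlowSet c s t).Nonempty := by
    refine ⟨fun _ _ => 0, fun u v => ⟨le_refl _, hc u v⟩, fun w _ _ => by simp [netOut]⟩
  obtain ⟨f, hf, hmax⟩ := hcompact.exists_isMaxOn hne ((hconts s).continuousOn)
  exact ⟨f, hf, hmax⟩

lemma maxflow_cut (c : V → V → ℝ) (s t : V) (hst : s ≠ t)
    (f : V → V → ℝ) (hf : f ∈ FlowSet c s t)
    (hmax : IsMaxOn (fun g => netOut g s) (FlowSet c s t) f) :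
    ∃ A : Finset V, s ∈ A ∧ t ∉ A ∧ netOut f s = cutCap c A := by
  classical
  set rel := fun a b => f a b < c a b ∨ 0 < f b a with hrel
  set A : Finset V := Finset.univ.filter (fun v => Relation.ReflTransGen rel s v) with hA
  have hsA : s ∈ A := by
    simp only [hA, Finset.mem_filter, Finset.mem_univ, true_and]
    exact Relation.ReflTransGen.refl
  have htA : t ∉ A := by
    simp only [hA, Finset.mem_filter, Finset.mem_univ, true_and]
    intro hreach
    obtain ⟨ε, hεpos, _, g, hgfeas, _, hgnet⟩ :=
      exists_augment c f hf.1 s t hreach 1 one_pos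
    have hgflow : g ∈ FlowSet c s t := by
      refine ⟨hgfeas, fun w hws hwt => ?_⟩
      rw [hgnet w, hf.2 w hws hwt]
      simp [hws, hwt]
    have := hmax hgflow
    simp only [Set.mem_setOf_eq] at this
    rw [hgnet s, if_pos rfl, if_neg hst] at this
    linarith
  refine ⟨A, hsA, htA, ?_⟩
  have h1 : ∑ v ∈ A, netOut f v = netOut f s := by
    rw [← Finset.add_sum_erase A _ hsA]
    have : ∀ v ∈ A.erase s, netOut f v = 0 := by
      intro v hv
      refine hf.2 v (Finset.ne_of_mem_erase hv) ?_
      intro h; subst h; exact htA (Finset.mem_of_mem_erase hv)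
    rw [Finset.sum_congr rfl this]
    simp
  rw [← h1, sum_netOut_cut]
  unfold cutCap
  apply Finset.sum_congr rfl
  intro u hu
  apply Finset.sum_congr rfl
  intro v hv
  simp only [hA, Finset.mem_filter, Finset.mem_univ, true_and] at hu
  have hvn : ¬ Relation.ReflTransGen rel s v := by
    simp only [Finset.mem_compl, hA, Finset.mem_filter, Finset.mem_univ, true_and] at hv
    exact hv
  have hnrel : ¬ rel u v := fun h => hvn (hu.tail h)
  rw [hrel] at hnrel
  have h2 : f u v = c u v := le_antisymm (hf.1 u v).2 (not_lt.1 fun h => hnrel (Or.inl h))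
  have h3 : f v u = 0 := le_antisymm (not_lt.1 fun h => hnrel (Or.inr h)) (hf.1 v u).1
  rw [h2, h3]; ring


lemma cutCap_nonneg {c : V → V → ℝ} (hc : ∀ u v, 0 ≤ c u v) (A : Finset V) :
    0 ≤ cutCap c A :=
  Finset.sum_nonneg fun u _ => Finset.sum_nonneg fun v _ => hc u v

lemma minCut_bddBelow {c : V → V → ℝ} (hc : ∀ u v, 0 ≤ c u v) (S T : Finset V) :
    BddBelow {x : ℝ | ∃ A : Finset V, S ⊆ A ∧ Disjoint T A ∧ x = cutCap c A} := by
  refine ⟨0, fun y hy => ?_⟩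
  obtain ⟨A, _, _, rfl⟩ := hy
  exact cutCap_nonneg hc A

-- Forward direction
theorem aux_fwd {k : ℕ} (c : V → V → ℝ)
    (hc : ∀ u v, 0 ≤ c u v) (q : Fin (k + 1) → V) (hq : Function.Injective q)
    (x : Fin (k + 1) → ℝ) (hx : ∀ i, i ≠ 0 → x i ≤ 0)
    (f : V → V → ℝ) (hf : IsExtFlow c f q x) :
    ((∑ i, x i) = 0 ∧
      ∀ S : Finset (Fin (k + 1)), S.Nonempty → (0 : Fin (k + 1)) ∉ S →
        ∑ i ∈ S, (-x i) ≤ minCut c {q 0} (S.image q)) := by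
  obtain ⟨hfeas, hcons, hterm⟩ := hf
  -- net outflow at a vertex
  have hnet : ∀ (A : Finset V), ∑ v ∈ A, netOut f v
      = ∑ i ∈ Finset.univ.filter (fun i => q i ∈ A), x i := by
    intro A
    rw [← Finset.sum_filter_add_sum_filter_not A (fun v => ∃ i, q i = v)]
    have h2 : ∑ v ∈ A.filter (fun v => ¬ ∃ i, q i = v), netOut f v = 0 := by
      apply Finset.sum_eq_zero
      intro v hv
      simp only [Finset.mem_filter, not_exists] at hv
      exact hcons v hv.2
    rw [h2, add_zero]
    have h3 : A.filter (fun v => ∃ i, q i = v)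
        = (Finset.univ.filter (fun i => q i ∈ A)).image q := by
      ext v
      simp only [Finset.mem_filter, Finset.mem_image, Finset.mem_univ, true_and]
      constructor
      · rintro ⟨hvA, i, rfl⟩; exact ⟨i, hvA, rfl⟩
      · rintro ⟨i, hiA, rfl⟩; exact ⟨hiA, i, rfl⟩
    rw [h3, Finset.sum_image (fun a _ b _ h => hq h)]
    exact Finset.sum_congr rfl fun i _ => hterm i
  constructor
  · have := hnet Finset.univ
    have h4 : Finset.univ.filter (fun i : Fin (k+1) => q i ∈ Finset.univ) = Finset.univ := by
      simp
    rw [sum_netOut_univ, h4] at this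
    exact this.symm
  · intro S hSne hS0
    apply le_csInf
    · refine ⟨cutCap c (S.image q)ᶜ, (S.image q)ᶜ, ?_, ?_, rfl⟩
      · intro v hv
        simp only [Finset.mem_singleton] at hv
        subst hv
        simp only [Finset.mem_compl, Finset.mem_image]
        rintro ⟨i, hiS, hi⟩
        exact hS0 (by rwa [hq hi] at hiS)
      · exact disjoint_compl_right
    · rintro b ⟨A, hq0A, hdisj, rfl⟩
      have hq0 : q 0 ∈ A := hq0A (Finset.mem_singleton_self _)
      -- lower bound on sum of netOut over Aᶜ
      have hlow : -(cutCap c A) ≤ ∑ v ∈ Aᶜ, netOut f v := by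
        rw [sum_netOut_cut, compl_compl]
        have : cutCap c A = ∑ u ∈ Aᶜ, ∑ v ∈ A, c v u := by
          unfold cutCap; rw [Finset.sum_comm]
        rw [this, ← Finset.sum_neg_distrib]
        apply Finset.sum_le_sum
        intro u hu
        rw [← Finset.sum_neg_distrib]
        apply Finset.sum_le_sum
        intro v hv
        have := (hfeas u v).1
        have := (hfeas v u).2
        linarith
      set T := Finset.univ.filter (fun i => q i ∈ Aᶜ) with hT
      have h5 : ∑ v ∈ Aᶜ, netOut f v = ∑ i ∈ T, x i := hnet Aᶜ
      have hST : S ⊆ T := by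
        intro i hi
        simp only [hT, Finset.mem_filter, Finset.mem_univ, true_and, Finset.mem_compl]
        exact fun hiA => (Finset.disjoint_left.1 hdisj) (Finset.mem_image_of_mem q hi) hiA
      have h0T : (0 : Fin (k+1)) ∉ T := by
        simp only [hT, Finset.mem_filter, Finset.mem_univ, true_and, Finset.mem_compl]
        exact fun h => h hq0
      have h6 : ∑ i ∈ T, x i ≤ ∑ i ∈ S, x i := by
        rw [← Finset.sum_filter_add_sum_filter_not T (· ∈ S)]
        have hfs : T.filter (· ∈ S) = S := by
          ext i
          simp only [Finset.mem_filter]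
          exact ⟨fun h => h.2, fun h => ⟨hST h, h⟩⟩
        rw [hfs]
        have : ∑ i ∈ T.filter (· ∉ S), x i ≤ 0 := by
          apply Finset.sum_nonpos
          intro i hi
          simp only [Finset.mem_filter] at hi
          exact hx i (fun h0 => h0T (h0 ▸ hi.1))
        linarith
      have h7 : -(cutCap c A) ≤ ∑ i ∈ S, x i := by
        rw [← h5] at *; linarith
      have : ∑ i ∈ S, (-x i) = -(∑ i ∈ S, x i) := by rw [Finset.sum_neg_distrib]
      linarith


end Aux

theorem aux_bwd {V : Type} [Fintype V] [DecidableEq V] {k : ℕ} (c : V → V → ℝ)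
    (hc : ∀ u v, 0 ≤ c u v) (q : Fin (k + 1) → V) (hq : Function.Injective q)
    (x : Fin (k + 1) → ℝ) (hx : ∀ i, i ≠ 0 → x i ≤ 0)
    (hsum : (∑ i, x i) = 0)
    (hcut : ∀ S : Finset (Fin (k + 1)), S.Nonempty → (0 : Fin (k + 1)) ∉ S →
          ∑ i ∈ S, (-x i) ≤ minCut c {q 0} (S.image q)) :
    ∃ f, IsExtFlow c f q x := by
  classical
  -- the augmented network on `Option V`
  set c' : Option V → Option V → ℝ := fun a b =>
    match a, b with
    | some u, some v => c u v
    | some u, none => ∑ j ∈ Finset.univ.filter (fun j => j ≠ 0 ∧ q j = u), (-x j)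
    | none, _ => 0
    with hc'def
  have hc' : ∀ a b, 0 ≤ c' a b := by
    rintro (_ | u) (_ | v)
    · exact le_refl 0
    · exact le_refl 0
    · exact Finset.sum_nonneg fun j hj => by
        simp only [Finset.mem_filter] at hj
        have := hx j hj.2.1
        linarith
    · exact hc u v
  set X : ℝ := ∑ j ∈ Finset.univ.filter (fun j : Fin (k+1) => j ≠ 0), (-x j) with hX
  have hx0 : x 0 = X := by
    have := Finset.sum_filter_add_sum_filter_not Finset.univ (fun j : Fin (k+1) => j = 0) x
    have h1 : Finset.univ.filter (fun j : Fin (k+1) => j = 0) = {0} := by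
      ext j; simp
    rw [h1, Finset.sum_singleton, hsum] at this
    rw [hX, Finset.sum_neg_distrib]
    simp only [ne_eq] at *
    linarith
  -- capacity into the sink
  have hcapX : ∑ u : V, c' (some u) none = X := by
    rw [hX]
    rw [← Finset.sum_fiberwise_of_maps_to (g := q) (t := Finset.univ)
      (fun i _ => Finset.mem_univ (q i)) (fun j => -x j)]
    apply Finset.sum_congr rfl
    intro u _
    apply Finset.sum_congr _ (fun _ _ => rfl)
    rw [Finset.filter_filter]
  -- every s-t cut in the augmented network has capacity at least X
  have hcutX : ∀ A' : Finset (Option V), some (q 0) ∈ A' → none ∉ A' →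
      X ≤ cutCap c' A' := by
    intro A' hs ht
    set A : Finset V := Finset.univ.filter (fun v => some v ∈ A') with hA
    have hmemA : ∀ v : V, v ∈ A ↔ some v ∈ A' := by
      intro v; simp [hA]
    -- decompose the cut capacity
    have hdec : cutCap c' A' = cutCap c A + ∑ u ∈ A, c' (some u) none := by
      rw [cutCap_eq c' A', Fintype.sum_option]
      have hnone : ∑ v : Option V, (if none ∈ A' ∧ v ∉ A' then c' none v else 0) = 0 := by
        apply Finset.sum_eq_zero; intro v _; simp [ht]
      rw [hnone, zero_add]
      have hrow : ∀ u : V, ∑ v : Option V, (if some u ∈ A' ∧ v ∉ A' then c' (some u) v else 0)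
          = (if u ∈ A then c' (some u) none else 0)
            + ∑ v : V, (if u ∈ A ∧ v ∉ A then c u v else 0) := by
        intro u
        rw [Fintype.sum_option]
        congr 1
        · by_cases h : some u ∈ A'
          · simp [h, ht, (hmemA u).2 h]
          · have h2 : u ∉ A := fun hh => h ((hmemA u).1 hh)
            simp [h, h2]
        · apply Finset.sum_congr rfl
          intro v _
          simp only [hmemA]
          rfl
      rw [Finset.sum_congr rfl (fun u _ => hrow u), Finset.sum_add_distrib]
      rw [cutCap_eq c A]
      rw [Finset.sum_ite_mem, Finset.univ_inter]
      ring
    rw [hdec]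
    -- the sink-edge part
    have hAedge : ∑ u ∈ A, c' (some u) none
        = ∑ j ∈ Finset.univ.filter (fun j => j ≠ 0 ∧ q j ∈ A), (-x j) := by
      rw [← Finset.sum_fiberwise_of_maps_to (g := q)
        (s := Finset.univ.filter (fun j => j ≠ 0 ∧ q j ∈ A)) (t := A)
        (fun i hi => by simp only [Finset.mem_filter] at hi; exact hi.2.2) (fun j => -x j)]
      apply Finset.sum_congr rfl
      intro u hu
      apply Finset.sum_congr _ (fun _ _ => rfl)
      rw [Finset.filter_filter]
      ext j
      simp only [Finset.mem_filter, Finset.mem_univ, true_and, and_assoc]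
      constructor
      · rintro ⟨h1, h2⟩; exact ⟨h1, (h2 ▸ hu), h2⟩
      · rintro ⟨h1, _, h3⟩; exact ⟨h1, h3⟩
    set S : Finset (Fin (k+1)) := Finset.univ.filter (fun j => j ≠ 0 ∧ q j ∉ A) with hS
    have hsplit : X = (∑ j ∈ S, (-x j))
        + ∑ j ∈ Finset.univ.filter (fun j => j ≠ 0 ∧ q j ∈ A), (-x j) := by
      have e1 : (Finset.univ.filter (fun j : Fin (k+1) => j ≠ 0)).filter (fun j => q j ∉ A)
          = S := by rw [hS, Finset.filter_filter]
      have e2 : (Finset.univ.filter (fun j : Fin (k+1) => j ≠ 0)).filter (fun j => ¬ q j ∉ A)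
          = Finset.univ.filter (fun j => j ≠ 0 ∧ q j ∈ A) := by
        rw [Finset.filter_filter]
        ext j
        simp
      rw [hX, ← Finset.sum_filter_add_sum_filter_not
        (Finset.univ.filter (fun j : Fin (k+1) => j ≠ 0)) (fun j => q j ∉ A) (fun j => -x j),
        e1, e2]
    rw [hsplit, hAedge]
    have hmain : ∑ j ∈ S, (-x j) ≤ cutCap c A := by
      rcases Finset.eq_empty_or_nonempty S with hSe | hSne
      · rw [hSe, Finset.sum_empty]; exact cutCap_nonneg hc A
      · have h0S : (0 : Fin (k+1)) ∉ S := by simp [hS]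
        refine le_trans (hcut S hSne h0S) ?_
        apply csInf_le (minCut_bddBelow hc _ _)
        refine ⟨A, ?_, ?_, rfl⟩
        · intro v hv
          simp only [Finset.mem_singleton] at hv
          subst hv
          exact (hmemA (q 0)).2 hs
        · rw [Finset.disjoint_left]
          rintro v hv
          simp only [Finset.mem_image] at hv
          obtain ⟨j, hjS, rfl⟩ := hv
          simp only [hS, Finset.mem_filter] at hjS
          exact hjS.2.2
    linarith
  -- get a maximum flow in the augmented network
  obtain ⟨g, hgflow, hgmax⟩ := exists_maxflow c' hc' (some (q 0)) none
  obtain ⟨A', hsA', htA', hval⟩ := maxflow_cut c' (some (q 0)) none (by simp) g hgflow hgmax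
  have hgfeas := hgflow.1
  have hgcons := hgflow.2
  -- flow out of `none` is zero
  have hnone0 : ∀ w, g none w = 0 :=
    fun w => le_antisymm ((hgfeas none w).2.trans (le_refl 0)) (hgfeas none w).1
  -- value = X
  have hvalge : X ≤ netOut g (some (q 0)) := hval ▸ hcutX A' hsA' htA'
  have hnetnone : netOut g none = - ∑ w : V, g (some w) none := by
    have h1 : ∑ w : Option V, g none w = 0 := Finset.sum_eq_zero fun w _ => hnone0 w
    unfold netOut
    rw [h1, Fintype.sum_option, hnone0 none]
    ring
  have hsumzero : netOut g (some (q 0)) + netOut g none = 0 := by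
    have h0 := sum_netOut_univ g
    rw [Fintype.sum_option] at h0
    have heq : ∑ v : V, netOut g (some v)
        = netOut g (some (q 0)) + ∑ v ∈ Finset.univ.erase (q 0), netOut g (some v) :=
      (Finset.add_sum_erase _ (fun v => netOut g (some v)) (Finset.mem_univ (q 0))).symm
    rw [heq] at h0
    have hz : ∑ v ∈ Finset.univ.erase (q 0), netOut g (some v) = 0 := by
      apply Finset.sum_eq_zero
      intro v hv
      refine hgcons (some v) ?_ (by simp)
      simp only [ne_eq, Option.some.injEq]
      exact Finset.ne_of_mem_erase hv
    rw [hz] at h0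
    linarith
  have hval_eq : netOut g (some (q 0)) = ∑ w : V, g (some w) none := by
    rw [hnetnone] at hsumzero
    linarith
  have hvalle : netOut g (some (q 0)) ≤ X := by
    rw [← hcapX, hval_eq]
    exact Finset.sum_le_sum fun w _ => (hgfeas (some w) none).2
  have hvalX : netOut g (some (q 0)) = X := le_antisymm hvalle hvalge
  -- all sink edges are saturated
  have hsat : ∀ u : V, g (some u) none = c' (some u) none := by
    have hsum2 : ∑ w : V, g (some w) none = ∑ w : V, c' (some w) none := by
      rw [hcapX, ← hvalX, hval_eq]
    have := (Finset.sum_eq_sum_iff_of_le (fun w _ => (hgfeas (some w) none).2)).1 hsum2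
    exact fun u => this u (Finset.mem_univ u)
  -- restrict the flow to V
  refine ⟨fun u v => g (some u) (some v), ?_, ?_, ?_⟩
  · exact fun u v => (hgfeas (some u) (some v))
  · intro v hv
    have hne : some v ≠ some (q 0) := by
      simp only [ne_eq, Option.some.injEq]
      exact fun h => hv 0 h.symm
    have h0 := hgcons (some v) hne (by simp)
    have hnetv : netOut (fun u v => g (some u) (some v)) v
        = netOut g (some v) - g (some v) none + g none (some v) := by
      unfold netOut
      rw [Fintype.sum_option (f := fun w => g (some v) w),
        Fintype.sum_option (f := fun w => g w (some v))]
      ring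
    rw [hnetv, h0, hnone0]
    have : c' (some v) none = 0 := by
      show (∑ j ∈ Finset.univ.filter (fun j => j ≠ 0 ∧ q j = v), (-x j)) = 0
      rw [Finset.filter_false_of_mem, Finset.sum_empty]
      intro j _
      exact fun h => hv j h.2
    rw [hsat v, this]
    ring
  · intro i
    have hnetv : netOut (fun u v => g (some u) (some v)) (q i)
        = netOut g (some (q i)) - g (some (q i)) none + g none (some (q i)) := by
      unfold netOut
      rw [Fintype.sum_option (f := fun w => g (some (q i)) w),
        Fintype.sum_option (f := fun w => g w (some (q i)))]
      ring
    rw [hnetv, hnone0, hsat]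
    by_cases hi : i = 0
    · subst hi
      have : c' (some (q 0)) none = 0 := by
        show (∑ j ∈ Finset.univ.filter (fun j => j ≠ 0 ∧ q j = q 0), (-x j)) = 0
        rw [Finset.filter_false_of_mem, Finset.sum_empty]
        intro j _
        rintro ⟨hj0, hjq⟩
        exact hj0 (hq hjq)
      rw [this, hvalX, hx0]
      ring
    · have hne : some (q i) ≠ some (q 0) := by
        simp only [ne_eq, Option.some.injEq]
        exact fun h => hi (hq h)
      rw [hgcons (some (q i)) hne (by simp)]
      have : c' (some (q i)) none = -x i := by
        show (∑ j ∈ Finset.univ.filter (fun j => j ≠ 0 ∧ q j = q i), (-x j)) = -x i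
        have : Finset.univ.filter (fun j => j ≠ 0 ∧ q j = q i) = {i} := by
          ext j
          simp only [Finset.mem_filter, Finset.mem_univ, true_and, Finset.mem_singleton]
          constructor
          · rintro ⟨_, hj⟩; exact hq hj
          · rintro rfl; exact ⟨hi, rfl⟩
        rw [this, Finset.sum_singleton]
      rw [this]
      ring


theorem stmt4 {V : Type} [Fintype V] [DecidableEq V] {k : ℕ} (c : V → V → ℝ)
    (hc : ∀ u v, 0 ≤ c u v) (q : Fin (k + 1) → V) (hq : Function.Injective q)
    (x : Fin (k + 1) → ℝ) (hx : ∀ i, i ≠ 0 → x i ≤ 0) :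
    (∃ f, IsExtFlow c f q x) ↔
      ((∑ i, x i) = 0 ∧
        ∀ S : Finset (Fin (k + 1)), S.Nonempty → (0 : Fin (k + 1)) ∉ S →
          ∑ i ∈ S, (-x i) ≤ minCut c {q 0} (S.image q)) := by
  constructor
  · rintro ⟨f, hf⟩
    exact aux_fwd c hc q hq x hx f hf
  · rintro ⟨h1, h2⟩
    exact aux_bwd c hc q hq x hx h1 h2
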